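/- For ideal MHD with γ-law gas, the potential function φ(v) = vᵀw − U(w) evaluates to ρ + β|B|², where β = ρ/(2p). -/
import Mathlib


/-- For ideal MHD with γ-law gas, the potential function vᵀw − U(w) equals ρ + β|B|². -/
theorem mhd_potential_function (γ ρ p E s β : ℝ) (u B : Fin 3 → ℝ)
    (hρ : 0 < ρ) (hp : 0 < p) (hγ : 1 < γ)
    (hE : E = p / (γ - 1) + ρ / 2 * (u 0 ^ 2 + u 1 ^ 2 + u 2 ^ 2)
            + (B 0 ^ 2 + B 1 ^ 2 + B 2 ^ 2) / 2)
    (hs : s = Real.log (p * ρ ^ (-γ)))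
    (hβ : β = ρ / (2 * p)) :
    -- vᵀ w with w = (ρ, ρu, B, E) and
    -- v = ((γ−s)/(γ−1) − β|u|², 2βu, 2βB, −2β), minus U(w) = −ρs/(γ−1)
    ((γ - s) / (γ - 1) - β * (u 0 ^ 2 + u 1 ^ 2 + u 2 ^ 2)) * ρ
      + (2 * β * u 0) * (ρ * u 0) + (2 * β * u 1) * (ρ * u 1) + (2 * β * u 2) * (ρ * u 2)
      + (2 * β * B 0) * B 0 + (2 * β * B 1) * B 1 + (2 * β * B 2) * B 2
      + (-2 * β) * E
      - (-(ρ * s) / (γ - 1))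
    = ρ + β * (B 0 ^ 2 + B 1 ^ 2 + B 2 ^ 2) := by
  subst hE hβ
  have h1 : γ - 1 ≠ 0 := sub_ne_zero.mpr (ne_of_gt hγ)
  field_simp
  ring
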